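/- Let ν_ρ, ν₄ ∈ ℝ with |ν₄| + 2|ν_ρ| < 1, v_{ρ,±}² = (1∓ν₄)² - 4ν_ρ² (positive roots), K = ((1-2ν_ρ)² - ν₄²)/(v_{ρ,+}v_{ρ,-}), ζ_ρ = 2ν_ρ/(v_{ρ,+}v_{ρ,-}), η_ρ = -1/2 + (4 - v_{ρ,+}² - v_{ρ,-}²)/(4 v_{ρ,+}v_{ρ,-}). Then 2(1 + η_ρ - ζ_ρ) = K + 1 and 2(1 + η_ρ + ζ_ρ) = K⁻¹ + 1. -/
import Mathlib


/-- Extended scaling relations. With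
`K = ((1-2ν_ρ)² - ν₄²)/(v₊v₋)`, `ζ_ρ = 2ν_ρ/(v₊v₋)`,
`η_ρ = -1/2 + (4 - v₊² - v₋²)/(4v₊v₋)`, one has
`2(1 + η_ρ - ζ_ρ) = K + 1` and `2(1 + η_ρ + ζ_ρ) = K⁻¹ + 1`. -/
theorem stmt_18 (ν₄ νρ : ℝ) (h : |ν₄| + 2 * |νρ| < 1)
    (vp vm : ℝ) (hvp : 0 < vp) (hvm : 0 < vm)
    (hvp2 : vp ^ 2 = (1 - ν₄) ^ 2 - 4 * νρ ^ 2)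
    (hvm2 : vm ^ 2 = (1 + ν₄) ^ 2 - 4 * νρ ^ 2)
    (K ζρ ηρ : ℝ)
    (hK : K = ((1 - 2 * νρ) ^ 2 - ν₄ ^ 2) / (vp * vm))
    (hζ : ζρ = 2 * νρ / (vp * vm))
    (hη : ηρ = -(1 / 2) + (4 - vp ^ 2 - vm ^ 2) / (4 * vp * vm)) :
    2 * (1 + ηρ - ζρ) = K + 1 ∧ 2 * (1 + ηρ + ζρ) = K⁻¹ + 1 := by
  have h4 : |ν₄| < 1 - 2 * |νρ| := by linarith
  have hν1 : ν₄ < 1 - 2 * |νρ| := lt_of_le_of_lt (le_abs_self _) h4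
  have hν2 : -(1 - 2 * |νρ|) < ν₄ := neg_lt_of_abs_lt h4
  have hρ1 : νρ ≤ |νρ| := le_abs_self _
  have hρ2 : -|νρ| ≤ νρ := neg_abs_le _
  have hP : 0 < vp * vm := mul_pos hvp hvm
  have hPne : vp * vm ≠ 0 := ne_of_gt hP
  have hA : 0 < (1 - 2 * νρ) ^ 2 - ν₄ ^ 2 := by nlinarith
  have hB : 0 < (1 + 2 * νρ) ^ 2 - ν₄ ^ 2 := by nlinarith
  have hKpos : 0 < K := by rw [hK]; exact div_pos hA hP
  have hprod : ((1 - 2 * νρ) ^ 2 - ν₄ ^ 2) * ((1 + 2 * νρ) ^ 2 - ν₄ ^ 2)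
      = (vp * vm) ^ 2 := by rw [mul_pow, hvp2, hvm2]; ring
  have hmul : K * (((1 + 2 * νρ) ^ 2 - ν₄ ^ 2) / (vp * vm)) = 1 := by
    rw [hK, div_mul_div_comm, hprod, sq, div_self (mul_ne_zero hPne hPne)]
  have hKinv : K⁻¹ = ((1 + 2 * νρ) ^ 2 - ν₄ ^ 2) / (vp * vm) :=
    inv_eq_of_mul_eq_one_right hmul
  have e1 : (4 - vp ^ 2 - vm ^ 2) = 2 * ((1 - 2 * νρ) ^ 2 - ν₄ ^ 2) + 8 * νρ := by
    linear_combination -hvp2 - hvm2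
  have e2 : (4 - vp ^ 2 - vm ^ 2) = 2 * ((1 + 2 * νρ) ^ 2 - ν₄ ^ 2) - 8 * νρ := by
    linear_combination -hvp2 - hvm2
  constructor
  · rw [hK, hζ, hη, e1]; field_simp; ring
  · rw [hKinv, hζ, hη, e2]; field_simp; ring
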